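/- arXiv:2010.06818 — 3 statements merged into one kernel-verified Lean document; each statement's English description precedes it below -/
import Mathlib

section
/- Let A be a real symmetric positive definite n×n matrix and B a real symmetric n×n matrix. Then the complex matrix A + iB is invertible. -/
open Matrix Complex
open scoped ComplexOrder

noncomputable def cpx {m n : Type*} (M : Matrix m n ℝ) : Matrix m n ℂ :=
  M.map (fun x => (x : ℂ))

lemma cpx_mul {n : ℕ} (M N : Matrix (Fin n) (Fin n) ℝ) :
    cpx (M * N) = cpx M * cpx N := by
  exact Matrix.map_mul (L := M) (M := N) (f := Complex.ofRealHom)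

lemma cpx_hermitian {n : ℕ} {M : Matrix (Fin n) (Fin n) ℝ} (h : M.IsSymm) :
    (cpx M).IsHermitian := by
  have hM : M.IsHermitian := h
  exact hM.map _ (fun x => (Complex.conj_ofReal x).symm ▸ by simp)

lemma herm_dot_real {n : ℕ} {M : Matrix (Fin n) (Fin n) ℂ} (h : M.IsHermitian)
    (x : Fin n → ℂ) : (star x ⬝ᵥ M *ᵥ x).im = 0 := by
  have : star (star x ⬝ᵥ M *ᵥ x) = star x ⬝ᵥ M *ᵥ x := by
    rw [← star_dotProduct_star, star_star, star_mulVec, ← dotProduct_mulVec, h.eq]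
  have := congrArg Complex.im this
  simp only [Complex.star_def, Complex.conj_im] at this
  linarith

/-- If `A` is real symmetric positive definite and `B` is real symmetric, then
the complex matrix `A + iB` is invertible. -/
theorem stmt0 {n : ℕ} (A B : Matrix (Fin n) (Fin n) ℝ)
    (hA : A.PosDef) (hB : B.IsSymm) :
    IsUnit (cpx A + Complex.I • cpx B) := by
  rw [← Matrix.mulVec_injective_iff_isUnit]
  rw [Function.Injective]
  intro x y hxy
  rw [← sub_eq_zero]
  by_contra hne
  set z := x - y with hz
  have hz0 : (cpx A + Complex.I • cpx B) *ᵥ z = 0 := by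
    rw [hz, mulVec_sub, hxy, sub_self]
  -- square root of A
  obtain ⟨L, hLsym, hLL, hLdet⟩ :
      ∃ L : Matrix (Fin n) (Fin n) ℝ, L.IsHermitian ∧ L * L = A ∧ L.det ≠ 0 := by
    open scoped MatrixOrder in
    refine ⟨CFC.sqrt A, (CFC.sqrt_nonneg A).isSelfAdjoint,
      CFC.sqrt_mul_sqrt_self A (Matrix.nonneg_iff_posSemidef.mpr hA.posSemidef), ?_⟩
    intro h0
    have : A.det = 0 := by
      open scoped MatrixOrder in
      rw [← CFC.sqrt_mul_sqrt_self A (Matrix.nonneg_iff_posSemidef.mpr hA.posSemidef), det_mul, h0, mul_zero]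
    exact (hA.det_pos.ne') this
  set L' := cpx L with hL'
  have hL'det : IsUnit L'.det := by
    have : L'.det = (L.det : ℂ) := by
      rw [hL', cpx]
      exact (RingHom.map_det Complex.ofRealHom L).symm
    rw [this]
    simpa using hLdet
  have hy : L' *ᵥ z ≠ 0 := by
    intro h0
    have hinj := Matrix.mulVec_injective_iff_isUnit.mpr (Matrix.isUnit_iff_isUnit_det L' |>.mpr hL'det)
    apply hne
    apply hinj
    simpa using h0
  set s := star z ⬝ᵥ (cpx A) *ᵥ z with hs
  set t := star z ⬝ᵥ (cpx B) *ᵥ z with ht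
  have hst : s + Complex.I * t = 0 := by
    have := congrArg (fun w => star z ⬝ᵥ w) hz0
    simpa [add_mulVec, smul_mulVec, dotProduct_add, dotProduct_smul, smul_eq_mul, hs, ht]
      using this
  have hL'herm : L'.IsHermitian := cpx_hermitian hLsym
  have hsform : s = star (L' *ᵥ z) ⬝ᵥ (L' *ᵥ z) := by
    rw [hs, ← hLL, cpx_mul, ← hL', ← mulVec_mulVec, dotProduct_mulVec, star_mulVec, hL'herm.eq]
  have hsnn : 0 ≤ s := hsform ▸ dotProduct_star_self_nonneg _
  have hsne : s ≠ 0 := by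
    rw [hsform]
    intro h0
    exact hy (dotProduct_star_self_eq_zero.mp h0)
  have hspos : 0 < s.re := by
    have h1 : 0 < s := lt_of_le_of_ne hsnn (Ne.symm hsne)
    simpa using (Complex.lt_def.mp h1).1
  have htim : t.im = 0 := herm_dot_real (cpx_hermitian hB) z
  have := congrArg Complex.re hst
  simp only [Complex.add_re, Complex.mul_re, Complex.I_re, Complex.I_im, Complex.zero_re,
    zero_mul, one_mul, zero_sub] at this
  rw [htim] at this
  simp at this
  linarith
end

section
/- Suppose A and B are real symmetric positive definite n×n matrices and a ≥ 0, b ∈ ℝ. Then the complex matrix A + aB + ibB is invertible and there exists a constant C depending only on A and B (not on a, b) such that the operator norm of (A + aB + ibB)^{-1} is at most C. -/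
open Matrix Complex
open scoped Matrix.Norms.L2Operator ComplexOrder

lemma cpx_isHermitian {n : ℕ} {A : Matrix (Fin n) (Fin n) ℝ} (h : A.IsHermitian) :
    (cpx A).IsHermitian :=
  h.map _ (fun a => by simp [Complex.conj_ofReal])

lemma cpx_re_form {n : ℕ} (A : Matrix (Fin n) (Fin n) ℝ) (x : Fin n → ℂ) :
    (star x ⬝ᵥ (cpx A) *ᵥ x).re =
      (fun i => (x i).re) ⬝ᵥ A *ᵥ (fun i => (x i).re) +
      (fun i => (x i).im) ⬝ᵥ A *ᵥ (fun i => (x i).im) := by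
  simp only [dotProduct, Matrix.mulVec, cpx, Matrix.map_apply, Pi.star_apply,
    Finset.mul_sum, Complex.re_sum, ← Finset.sum_add_distrib]
  refine Finset.sum_congr rfl fun i _ => ?_
  refine Finset.sum_congr rfl fun j _ => ?_
  simp [Complex.mul_re, Complex.mul_im]

lemma herm_form_im {n : ℕ} {M : Matrix (Fin n) (Fin n) ℂ} (herm : M.IsHermitian)
    (x : Fin n → ℂ) : (star x ⬝ᵥ M *ᵥ x).im = 0 := by
  have : star (star x ⬝ᵥ M *ᵥ x) = star x ⬝ᵥ M *ᵥ x := by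
    conv_lhs => rw [star_dotProduct, star_star, star_mulVec, ← dotProduct_mulVec, herm.eq]
  have h := congrArg Complex.im this
  simp only [Complex.star_def, Complex.conj_im] at h
  linarith

lemma cpx_posDef {n : ℕ} {A : Matrix (Fin n) (Fin n) ℝ} (hA : A.PosDef) :
    (cpx A).PosDef := by
  refine Matrix.PosDef.of_dotProduct_mulVec_pos (cpx_isHermitian hA.1) fun x hx => ?_
  rw [Complex.lt_def]
  constructor
  · simp only [Complex.zero_re, cpx_re_form]
    set u := fun i => (x i).re
    set v := fun i => (x i).im
    have huv : u ≠ 0 ∨ v ≠ 0 := by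
      by_contra h
      push_neg at h
      apply hx
      funext i
      have h1 := congrFun h.1 i
      have h2 := congrFun h.2 i
      exact Complex.ext h1 h2
    rcases huv with hu | hv
    · have h1 : 0 < u ⬝ᵥ A *ᵥ u := by simpa using hA.dotProduct_mulVec_pos hu
      have h2 : 0 ≤ v ⬝ᵥ A *ᵥ v := by simpa using hA.posSemidef.dotProduct_mulVec_nonneg v
      linarith
    · have h1 : 0 ≤ u ⬝ᵥ A *ᵥ u := by simpa using hA.posSemidef.dotProduct_mulVec_nonneg u
      have h2 : 0 < v ⬝ᵥ A *ᵥ v := by simpa using hA.dotProduct_mulVec_pos hv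
      linarith
  · rw [Complex.zero_im, herm_form_im (cpx_isHermitian hA.1)]

/-- If `A` and `B` are real symmetric positive definite, then for all `a ≥ 0` and real `b`,
the matrix `A + aB + ibB` is invertible and the operator norm of its inverse is bounded by a
constant `C` independent of `a` and `b`. -/
theorem stmt3 {n : ℕ} (A B : Matrix (Fin n) (Fin n) ℝ) (hA : A.PosDef) (hB : B.PosDef) :
    ∃ C : ℝ, ∀ a b : ℝ, 0 ≤ a →
      IsUnit (cpx A + (a : ℂ) • cpx B + (Complex.I * b) • cpx B) ∧
      ‖(cpx A + (a : ℂ) • cpx B + (Complex.I * b) • cpx B)⁻¹‖ ≤ C := by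
  rcases Nat.eq_zero_or_pos n with hn | hn
  · subst hn
    refine ⟨0, fun a b ha => ⟨isUnit_of_subsingleton _, ?_⟩⟩
    have h0 : (cpx A + (a : ℂ) • cpx B + (Complex.I * b) • cpx B)⁻¹ = 0 :=
      Subsingleton.elim _ _
    rw [h0, norm_zero]
  haveI : Nonempty (Fin n) := ⟨⟨0, hn⟩⟩
  set K := toEuclideanCLM (𝕜 := ℂ) (n := Fin n) with hK
  have hform : ∀ (M : Matrix (Fin n) (Fin n) ℂ) (x : EuclideanSpace ℂ (Fin n)),
      (inner ℂ x (K M x) : ℂ) =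
        star (WithLp.equiv 2 _ x) ⬝ᵥ M *ᵥ (WithLp.equiv 2 _ x) := by
    intro M x
    rw [EuclideanSpace.inner_eq_star_dotProduct, dotProduct_comm]
    rfl
  have hgc : Continuous fun x : EuclideanSpace ℂ (Fin n) =>
      (inner ℂ x (K (cpx A) x) : ℂ).re :=
    Complex.continuous_re.comp (Continuous.inner continuous_id (K (cpx A)).continuous)
  obtain ⟨x₀, hx₀, hmin'⟩ := (isCompact_sphere (0 : EuclideanSpace ℂ (Fin n)) 1).exists_isMinOn
    (NormedSpace.sphere_nonempty.mpr zero_le_one) hgc.continuousOn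
  have hmin : ∀ y ∈ Metric.sphere (0 : EuclideanSpace ℂ (Fin n)) 1,
      (inner ℂ x₀ (K (cpx A) x₀) : ℂ).re ≤ (inner ℂ y (K (cpx A) y) : ℂ).re := hmin'
  set c : ℝ := (inner ℂ x₀ (K (cpx A) x₀) : ℂ).re with hcdef
  have hx₀n : ‖x₀‖ = 1 := mem_sphere_zero_iff_norm.mp hx₀
  have hpos : ∀ (M : Matrix (Fin n) (Fin n) ℂ), M.PosDef →
      ∀ x : EuclideanSpace ℂ (Fin n), x ≠ 0 → 0 < (inner ℂ x (K M x) : ℂ).re := by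
    intro M hM x hx
    rw [hform]
    have hx' : WithLp.equiv 2 (Fin n → ℂ) x ≠ 0 := by
      simpa using (WithLp.equiv 2 (Fin n → ℂ)).injective.ne_iff.mpr hx
    simpa using (Complex.lt_def.mp (hM.dotProduct_mulVec_pos hx')).1
  have hc : 0 < c := by
    refine hpos _ (cpx_posDef hA) x₀ ?_
    intro h
    rw [h, norm_zero] at hx₀n
    exact one_ne_zero hx₀n.symm
  have hAlow : ∀ x : EuclideanSpace ℂ (Fin n),
      c * ‖x‖ ^ 2 ≤ (inner ℂ x (K (cpx A) x) : ℂ).re := by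
    intro x
    rcases eq_or_ne x 0 with rfl | hx
    · simp
    · have hxn : (0 : ℝ) < ‖x‖ := norm_pos_iff.mpr hx
      set s : ℂ := (‖x‖ : ℂ) with hs
      have hs0 : s ≠ 0 := Complex.ofReal_ne_zero.mpr hxn.ne'
      set y : EuclideanSpace ℂ (Fin n) := s⁻¹ • x with hy
      have hys : x = s • y := by
        rw [hy, smul_smul, mul_inv_cancel₀ hs0, one_smul]
      have hyn : ‖y‖ = 1 := by
        rw [hy, norm_smul, norm_inv, hs, Complex.norm_real, Real.norm_eq_abs, abs_of_pos hxn,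
          inv_mul_cancel₀ hxn.ne']
      have hmem : y ∈ Metric.sphere (0 : EuclideanSpace ℂ (Fin n)) 1 :=
        mem_sphere_zero_iff_norm.mpr hyn
      have hy' := hmin y hmem
      have hinner : (inner ℂ x (K (cpx A) x) : ℂ) =
          ((‖x‖ ^ 2 : ℝ) : ℂ) * inner ℂ y (K (cpx A) y) := by
        conv_lhs => rw [hys]
        rw [inner_smul_left, _root_.map_smul, inner_smul_right, hs, Complex.conj_ofReal]
        push_cast
        ring
      rw [hinner, Complex.re_ofReal_mul]
      have h2 : (0:ℝ) ≤ ‖x‖ ^ 2 := sq_nonneg _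
      nlinarith
  refine ⟨c⁻¹, fun a b ha => ?_⟩
  set M : Matrix (Fin n) (Fin n) ℂ := cpx A + (a : ℂ) • cpx B + (Complex.I * b) • cpx B with hMdef
  have hKM : ∀ x : EuclideanSpace ℂ (Fin n),
      K M x = K (cpx A) x + (a : ℂ) • K (cpx B) x + (Complex.I * b) • K (cpx B) x := by
    intro x
    rw [hMdef, map_add, map_add, _root_.map_smul K ((a : ℂ)) (cpx B),
      _root_.map_smul K (Complex.I * (b : ℂ)) (cpx B)]
    rfl
  have hBre : ∀ x : EuclideanSpace ℂ (Fin n), 0 ≤ (inner ℂ x (K (cpx B) x) : ℂ).re := by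
    intro x
    rw [hform]
    simpa using (Complex.le_def.mp ((cpx_posDef hB).posSemidef.dotProduct_mulVec_nonneg (WithLp.equiv 2 _ x))).1
  have hBim : ∀ x : EuclideanSpace ℂ (Fin n), (inner ℂ x (K (cpx B) x) : ℂ).im = 0 := by
    intro x
    rw [hform]
    exact herm_form_im (cpx_isHermitian hB.1) _
  have hMre : ∀ x : EuclideanSpace ℂ (Fin n),
      c * ‖x‖ ^ 2 ≤ (inner ℂ x (K M x) : ℂ).re := by
    intro x
    have h1 := hAlow x
    have h2 := hBre x
    have h3 := hBim x
    rw [hKM x, inner_add_right, inner_add_right, inner_smul_right, inner_smul_right]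
    simp only [Complex.add_re, Complex.mul_re, Complex.mul_im, Complex.I_re, Complex.I_im,
      Complex.ofReal_re, Complex.ofReal_im, h3]
    nlinarith [mul_nonneg ha h2]
  have hlow : ∀ x : EuclideanSpace ℂ (Fin n), c * ‖x‖ ≤ ‖K M x‖ := by
    intro x
    rcases eq_or_ne x 0 with rfl | hx
    · simp
    · have h1 := hMre x
      have h2 : (inner ℂ x (K M x) : ℂ).re ≤ ‖x‖ * ‖K M x‖ := by
        simpa using re_inner_le_norm (𝕜 := ℂ) x (K M x)
      have hxn : (0 : ℝ) < ‖x‖ := norm_pos_iff.mpr hx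
      nlinarith
  have hU : IsUnit M := by
    rw [← Matrix.mulVec_injective_iff_isUnit]
    intro u v huv
    have e : ∀ w : Fin n → ℂ,
        K M ((WithLp.equiv 2 (Fin n → ℂ)).symm w) = (WithLp.equiv 2 _).symm (M *ᵥ w) :=
      fun w => rfl
    have h0 : K M ((WithLp.equiv 2 (Fin n → ℂ)).symm u - (WithLp.equiv 2 (Fin n → ℂ)).symm v)
        = 0 := by
      rw [map_sub, e, e, huv, sub_self]
    have hl := hlow ((WithLp.equiv 2 (Fin n → ℂ)).symm u - (WithLp.equiv 2 (Fin n → ℂ)).symm v)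
    rw [h0, norm_zero] at hl
    have : ‖(WithLp.equiv 2 (Fin n → ℂ)).symm u - (WithLp.equiv 2 (Fin n → ℂ)).symm v‖ = 0 := by
      nlinarith [norm_nonneg ((WithLp.equiv 2 (Fin n → ℂ)).symm u - (WithLp.equiv 2 (Fin n → ℂ)).symm v)]
    have hsub := norm_eq_zero.mp this
    have := sub_eq_zero.mp hsub
    exact (WithLp.equiv 2 (Fin n → ℂ)).symm.injective this
  refine ⟨hU, ?_⟩
  have hdet : IsUnit M.det := (Matrix.isUnit_iff_isUnit_det M).mp hU
  have hMinv : M * M⁻¹ = 1 := Matrix.mul_nonsing_inv M hdet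
  rw [Matrix.cstar_norm_def]
  refine ContinuousLinearMap.opNorm_le_bound _ (inv_nonneg.mpr hc.le) fun y => ?_
  have hKy : K M (K M⁻¹ y) = y := by
    calc K M (K M⁻¹ y) = (K M * K M⁻¹) y := rfl
      _ = K (M * M⁻¹) y := by rw [_root_.map_mul]
      _ = y := by rw [hMinv]; simp
  have hl := hlow (K M⁻¹ y)
  rw [hKy] at hl
  have h3 := mul_le_mul_of_nonneg_left hl (inv_nonneg.mpr hc.le)
  rw [← mul_assoc, inv_mul_cancel₀ hc.ne', one_mul] at h3
  exact h3
end

section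
/- Let A be a real symmetric positive definite matrix, Q a real symmetric negative semidefinite matrix, and A₁ a real symmetric matrix. If λ ∈ ℂ, ξ ∈ ℂ with Re ξ > 0, η ≥ 0, and det(ξA + λA₁ − ηQ) = 0, then λ is not purely imaginary. -/
open Matrix Complex

lemma form_eq {n : ℕ} (M : Matrix (Fin n) (Fin n) ℝ) (v : Fin n → ℂ) :
    star v ⬝ᵥ (cpx M) *ᵥ v = ∑ i, ∑ j, ((M i j : ℂ)) * ((starRingEnd ℂ) (v i) * v j) := by
  simp [dotProduct, mulVec, cpx, Finset.mul_sum]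
  congr 1; ext i; congr 1; ext j; ring

lemma form_re {n : ℕ} (M : Matrix (Fin n) (Fin n) ℝ) (v : Fin n → ℂ) :
    (star v ⬝ᵥ (cpx M) *ᵥ v).re =
      (fun i => (v i).re) ⬝ᵥ M *ᵥ (fun i => (v i).re)
      + (fun i => (v i).im) ⬝ᵥ M *ᵥ (fun i => (v i).im) := by
  rw [form_eq]
  simp only [Complex.re_sum, dotProduct, mulVec, Finset.mul_sum]
  rw [← Finset.sum_add_distrib]
  congr 1; ext i
  rw [← Finset.sum_add_distrib]
  congr 1; ext j
  simp [Complex.mul_re, Complex.mul_im]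
  ring

lemma form_im {n : ℕ} (M : Matrix (Fin n) (Fin n) ℝ) (hM : M.IsSymm) (v : Fin n → ℂ) :
    (star v ⬝ᵥ (cpx M) *ᵥ v).im = 0 := by
  rw [form_eq]
  simp only [Complex.im_sum]
  have key : ∀ i j, (((M i j : ℂ)) * ((starRingEnd ℂ) (v i) * v j)).im
      + (((M j i : ℂ)) * ((starRingEnd ℂ) (v j) * v i)).im = 0 := by
    intro i j
    have h : M j i = M i j := hM.apply i j
    rw [h]
    simp only [Complex.mul_im, Complex.mul_re, Complex.ofReal_re, Complex.ofReal_im,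
      Complex.conj_re, Complex.conj_im]
    ring
  have := Finset.sum_comm (s := Finset.univ) (t := Finset.univ)
    (f := fun i j => (((M i j : ℂ)) * ((starRingEnd ℂ) (v i) * v j)).im)
  have h2 : (∑ i, ∑ j, (((M i j : ℂ)) * ((starRingEnd ℂ) (v i) * v j)).im) * 2 = 0 := by
    rw [mul_two]
    nth_rewrite 2 [this]
    rw [← Finset.sum_add_distrib]
    apply Finset.sum_eq_zero; intro i _
    rw [← Finset.sum_add_distrib]
    exact Finset.sum_eq_zero fun j _ => key i j
  linarith [h2]


lemma herm_isSymm {n : ℕ} {A : Matrix (Fin n) (Fin n) ℝ} (h : A.IsHermitian) : A.IsSymm := by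
  rw [Matrix.IsSymm, ← Matrix.conjTranspose_eq_transpose_of_trivial]; exact h

/-- Let `A` be real symmetric positive definite, `Q` real symmetric negative semidefinite and
`A₁` real symmetric. If `Re ξ > 0`, `η ≥ 0` and `det(ξA + λA₁ − ηQ) = 0`, then `λ` is not
purely imaginary. -/
theorem stmt12 {n : ℕ} (A Q A1 : Matrix (Fin n) (Fin n) ℝ)
    (hA : A.PosDef) (hQ : (-Q).PosSemidef) (hA1 : A1.IsSymm)
    (l ξ : ℂ) (hξ : 0 < ξ.re) (η : ℝ) (hη : 0 ≤ η)
    (hdet : (ξ • cpx A + l • cpx A1 - (η : ℂ) • cpx Q).det = 0) :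
    l.re ≠ 0 := by
  intro hl
  obtain ⟨v, hv0, hv⟩ := (Matrix.exists_mulVec_eq_zero_iff).mpr hdet
  set x : Fin n → ℝ := fun i => (v i).re with hx
  set y : Fin n → ℝ := fun i => (v i).im with hy
  -- the quadratic form vanishes
  have h0 : star v ⬝ᵥ (ξ • cpx A + l • cpx A1 - (η : ℂ) • cpx Q) *ᵥ v = 0 := by
    rw [hv, dotProduct_zero]
  rw [sub_mulVec, add_mulVec, smul_mulVec, smul_mulVec, smul_mulVec,
    dotProduct_sub, dotProduct_add, dotProduct_smul, dotProduct_smul, dotProduct_smul] at h0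
  set a := star v ⬝ᵥ (cpx A) *ᵥ v with ha
  set b := star v ⬝ᵥ (cpx A1) *ᵥ v with hb
  set q := star v ⬝ᵥ (cpx Q) *ᵥ v with hq
  have hQsymm : Q.IsSymm := by
    have := herm_isSymm hQ.1
    rw [Matrix.IsSymm] at this ⊢
    have h2 := congrArg Neg.neg this
    simpa using h2
  have haim : a.im = 0 := form_im A (herm_isSymm hA.1) v
  have hbim : b.im = 0 := form_im A1 hA1 v
  have hqim : q.im = 0 := form_im Q hQsymm v
  have hre : (ξ • a + l • b - (η : ℂ) • q).re = 0 := by rw [h0]; rfl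
  simp only [Complex.sub_re, Complex.add_re, smul_eq_mul, Complex.mul_re, haim, hbim, hqim,
    mul_zero, sub_zero, hl, zero_mul, add_zero, Complex.ofReal_re, Complex.ofReal_im,
    zero_mul, sub_zero] at hre
  -- hre : ξ.re * a.re + 0 - η * q.re = 0  (roughly)
  have hxy : x ≠ 0 ∨ y ≠ 0 := by
    by_contra h
    push_neg at h
    apply hv0
    funext i
    have h1 := congrFun h.1 i
    have h2 := congrFun h.2 i
    exact Complex.ext h1 h2
  have hare : 0 < a.re := by
    rw [ha, form_re, ← hx, ← hy]
    rcases hxy with h | h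
    · have := hA.dotProduct_mulVec_pos h
      rw [star_trivial] at this
      have h2 : 0 ≤ y ⬝ᵥ A *ᵥ y := hA.posSemidef.dotProduct_mulVec_nonneg y
      linarith
    · have := hA.dotProduct_mulVec_pos h
      rw [star_trivial] at this
      have h2 : 0 ≤ x ⬝ᵥ A *ᵥ x := hA.posSemidef.dotProduct_mulVec_nonneg x
      linarith
  have hqre : q.re ≤ 0 := by
    rw [hq, form_re, ← hx, ← hy]
    have h1 : 0 ≤ x ⬝ᵥ (-Q) *ᵥ x := hQ.dotProduct_mulVec_nonneg x
    have h2 : 0 ≤ y ⬝ᵥ (-Q) *ᵥ y := hQ.dotProduct_mulVec_nonneg y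
    simp only [neg_mulVec, dotProduct_neg, RCLike.re_to_real] at h1 h2
    linarith
  nlinarith [mul_pos hξ hare, mul_nonneg hη (neg_nonneg.mpr hqre)]
end
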